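/- Let G be the graph on the cycle ℤ_N with horizontal edges between consecutive vertices and one vertical edge below and one above each vertex. For basis vectors Ψ_x, Ψ_y, let 𝒱(Ψ_x, Ψ_y) be the set of arrow configurations on the edges of G obeying the ice rule (exactly two arrows enter and two exit each vertex of ℤ_N) whose bottom vertical arrows are given by Ψ_x (up arrow at position i iff Ψ_x(i) = +1) and whose top vertical arrows are given by Ψ_y. Then |𝒱(Ψ_x, Ψ_y)| = 2 if x = y; |𝒱(Ψ_x, Ψ_y)| = 1 if x ≠ y and x, y are interlaced; and |𝒱(Ψ_x, Ψ_y)| = 0 otherwise. -/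

import Mathlib

open scoped BigOperators
open Complex

noncomputable section

/-- Positions (in `{1, …, N}`) of a subset of `Fin N`, in increasing order. -/
def posList {N : ℕ} (A : Finset (Fin N)) : List ℕ :=
  (A.sort (· ≤ ·)).map (fun i => (i : ℕ) + 1)

/-- `a₁ ≤ b₁ ≤ a₂ ≤ b₂ ≤ … ≤ aₙ ≤ bₙ` for two lists of the same length. -/
def seqInterlace (a b : List ℕ) : Prop :=
  ∀ i, i < a.length →
    (a.getD i 0 ≤ b.getD i 0 ∧ (i + 1 < a.length → b.getD i 0 ≤ a.getD (i + 1) 0))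

/-- Interlacement of two subsets of `{1, …, N}`. -/
def Interlaced {N : ℕ} (A B : Finset (Fin N)) : Prop :=
  A.card = B.card ∧
    (seqInterlace (posList A) (posList B) ∨ seqInterlace (posList B) (posList A))

/-- `P(Ψ_x, Ψ_y)`, the number of positions at which `Ψ_x` and `Ψ_y` differ. -/
def Pdiff {N : ℕ} (A B : Finset (Fin N)) : ℕ := (symmDiff A B).card

open scoped Classical in
/-- The transfer matrix `V` of the six-vertex model (case `a = b = 1`). -/
def transferV (N : ℕ) (c : ℝ) : Matrix (Finset (Fin N)) (Finset (Fin N)) ℂ :=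
  Matrix.of fun A B =>
    if A = B then 2 else if Interlaced A B then (c : ℂ) ^ (Pdiff A B) else 0

open scoped Classical in
/-- The ice rule at vertex `i` of the one-row graph `G`: `h` gives the horizontal arrows
(`h i` is the edge from `i` to `i+1`, `true` = pointing right), `vb`/`vt` the bottom/top
vertical arrows (`true` = pointing up); exactly two arrows enter the vertex. -/
def iceAtRow {N : ℕ} [NeZero N] (h vb vt : Fin N → Bool) (i : Fin N) : Prop :=
  ((if h (i - 1) then 1 else 0) + (if h i then 0 else 1) +
    (if vb i then 1 else 0) + (if vt i then 0 else 1) : ℕ) = 2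

open scoped Classical in
/-- `𝒱(Ψ_A, Ψ_B)`: ice-rule arrow configurations on the one-row graph whose bottom
vertical arrows are given by `Ψ_A` and top vertical arrows by `Ψ_B` (a configuration is
determined by its horizontal arrows `h`). -/
def rowConfigs {N : ℕ} [NeZero N] (A B : Finset (Fin N)) : Finset (Fin N → Bool) :=
  Finset.univ.filter fun h : Fin N → Bool =>
    ∀ i : Fin N, iceAtRow h (fun j => decide (j ∈ A)) (fun j => decide (j ∈ B)) i


namespace CR
variable {N : ℕ} [NeZero N]


def cnt (A : Finset (Fin N)) (t : ℕ) : ℕ := (A.filter (fun i : Fin N => (i : ℕ) < t)).card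

def g (A B : Finset (Fin N)) (t : ℕ) : ℤ := (cnt A t : ℤ) - cnt B t

lemma cnt_zero (A : Finset (Fin N)) : cnt A 0 = 0 := by
  simp [cnt]

lemma cnt_of_ge (A : Finset (Fin N)) {t : ℕ} (ht : N ≤ t) : cnt A t = A.card := by
  unfold cnt
  rw [Finset.filter_true_of_mem fun i _ => lt_of_lt_of_le i.isLt ht]

lemma cnt_succ (A : Finset (Fin N)) {t : ℕ} (ht : t < N) :
    cnt A (t + 1) = cnt A t + (if (⟨t, ht⟩ : Fin N) ∈ A then 1 else 0) := by
  classical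
  unfold cnt
  rw [Finset.card_filter, Finset.card_filter]
  have step : ∀ i ∈ A, (if (i:ℕ) < t+1 then (1:ℕ) else 0)
      = (if (i:ℕ) < t then 1 else 0) + (if i = ⟨t, ht⟩ then 1 else 0) := by
    intro i _
    by_cases hi : i = ⟨t, ht⟩
    · subst hi; simp
    · have hv : (i:ℕ) ≠ t := fun hh => hi (Fin.ext hh)
      by_cases h2 : (i:ℕ) < t <;> simp [hi, h2] <;> omega
  rw [Finset.sum_congr rfl step, Finset.sum_add_distrib, Finset.sum_ite_eq' A]

lemma g_zero (A B : Finset (Fin N)) : g A B 0 = 0 := by simp [g, cnt_zero]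

lemma g_succ (A B : Finset (Fin N)) {t : ℕ} (ht : t < N) :
    g A B (t + 1) = g A B t +
      ((if (⟨t, ht⟩ : Fin N) ∈ A then 1 else 0) - (if (⟨t, ht⟩ : Fin N) ∈ B then 1 else 0)) := by
  unfold g
  rw [cnt_succ A ht, cnt_succ B ht]
  push_cast
  split_ifs <;> ring

lemma g_of_ge (A B : Finset (Fin N)) {t : ℕ} (ht : N ≤ t) : g A B t = (A.card : ℤ) - B.card := by
  simp [g, cnt_of_ge A ht, cnt_of_ge B ht]

lemma ice_iff [NeZero N] {A B : Finset (Fin N)} (h : Fin N → Bool) (i : Fin N) :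
    iceAtRow h (fun j => decide (j ∈ A)) (fun j => decide (j ∈ B)) i ↔
      ((if h i then 1 else 0) - (if h (i - 1) then 1 else 0) : ℤ)
        = (if i ∈ A then 1 else 0) - (if i ∈ B then 1 else 0) := by
  classical
  unfold iceAtRow
  cases h1 : h (i - 1) <;> cases h2 : h i <;> by_cases hA : i ∈ A <;> by_cases hB : i ∈ B <;>
    simp [hA, hB]



lemma mem_iff {A B : Finset (Fin N)} {h : Fin N → Bool} :
    h ∈ rowConfigs A B ↔ ∀ i : Fin N,
      ((if h i then 1 else 0) - (if h (i - 1) then 1 else 0) : ℤ)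
        = (if i ∈ A then 1 else 0) - (if i ∈ B then 1 else 0) := by
  classical
  unfold rowConfigs
  rw [Finset.mem_filter]
  simp only [Finset.mem_univ, true_and]
  exact forall_congr' fun i => ice_iff h i

lemma Npos : 0 < N := Nat.pos_of_ne_zero (NeZero.ne N)

lemma sub_one_val (i : Fin N) : ((i - 1 : Fin N) : ℕ) = if (i:ℕ) = 0 then N - 1 else (i:ℕ) - 1 := by
  obtain ⟨n, rfl⟩ : ∃ n, N = n + 1 := ⟨N - 1, (Nat.succ_pred_eq_of_pos Npos).symm⟩
  rw [Fin.coe_sub_one]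
  by_cases h : i = 0
  · simp [h]
  · have hv : (i : ℕ) ≠ 0 := fun hh => h (Fin.ext hh)
    simp [h, hv]

/-- The walk determination lemma. -/
lemma h_walk {A B : Finset (Fin N)} {h : Fin N → Bool} (hh : h ∈ rowConfigs A B) :
    ∀ t (ht : t < N),
      ((if h ⟨t, ht⟩ then 1 else 0 : ℤ))
        = (if h ⟨N - 1, Nat.sub_lt Npos Nat.one_pos⟩ then 1 else 0) + g A B (t + 1) := by
  intro t
  induction t with
  | zero =>
    intro ht
    have e := mem_iff.mp hh ⟨0, ht⟩
    have hsub : ((⟨0, ht⟩ : Fin N) - 1) = ⟨N - 1, Nat.sub_lt Npos Nat.one_pos⟩ := by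
      apply Fin.ext
      rw [sub_one_val]
      simp
    rw [hsub] at e
    have hg : g A B 1 = (if (⟨0, ht⟩ : Fin N) ∈ A then 1 else 0)
        - (if (⟨0, ht⟩ : Fin N) ∈ B then 1 else 0) := by
      rw [g_succ A B ht, g_zero]; ring
    rw [hg]
    omega
  | succ t ih =>
    intro ht
    have htN : t < N := by omega
    have iht := ih htN
    have e := mem_iff.mp hh ⟨t + 1, ht⟩
    have hsub : ((⟨t + 1, ht⟩ : Fin N) - 1) = ⟨t, htN⟩ := by
      apply Fin.ext
      rw [sub_one_val]
      simp
    rw [hsub] at e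
    have hg := g_succ A B (t := t + 1) ht
    omega


lemma gN_eq_zero {A B : Finset (Fin N)} {h : Fin N → Bool} (hh : h ∈ rowConfigs A B) :
    g A B N = 0 := by
  have := h_walk hh (N - 1) (Nat.sub_lt (Npos (N:=N)) Nat.one_pos)
  have hN : N - 1 + 1 = N := by have := Npos (N:=N); omega
  rw [hN] at this
  omega

lemma g_bounds {A B : Finset (Fin N)} {h : Fin N → Bool} (hh : h ∈ rowConfigs A B) :
    ∀ t, (if h ⟨N - 1, Nat.sub_lt Npos Nat.one_pos⟩ then 1 else 0 : ℤ) + g A B t ∈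
      Set.Icc (0:ℤ) 1 := by
  intro t
  rcases Nat.eq_zero_or_pos t with rfl | ht0
  · rw [g_zero]; split_ifs <;> simp
  rcases le_or_gt t N with htN | htN
  · have hw := h_walk hh (t - 1) (by omega)
    have : t - 1 + 1 = t := by omega
    rw [this] at hw
    constructor <;> [skip; skip] <;> split_ifs at hw ⊢ <;> omega
  · have : g A B t = g A B N := by
      rw [g_of_ge A B (le_of_lt htN), g_of_ge A B (le_refl N)]
    rw [this, gN_eq_zero hh]
    split_ifs <;> simp

lemma eq_of_mem {A B : Finset (Fin N)} (hAB : A ≠ B) {h h' : Fin N → Bool}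
    (hh : h ∈ rowConfigs A B) (hh' : h' ∈ rowConfigs A B) : h = h' := by
  by_cases hs : h ⟨N - 1, Nat.sub_lt (Npos (N:=N)) Nat.one_pos⟩
      = h' ⟨N - 1, Nat.sub_lt (Npos (N:=N)) Nat.one_pos⟩
  · funext j
    have w := h_walk hh j.val j.isLt
    have w' := h_walk hh' j.val j.isLt
    rw [hs] at w
    simp only [Fin.eta] at w w'
    have : (if h j then 1 else 0 : ℤ) = if h' j then 1 else 0 := by omega
    cases hj : h j <;> cases hj' : h' j <;> simp only [hj, hj'] at this ⊢ <;>
      first | rfl | norm_num at this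
  · exfalso
    apply hAB
    have hz : ∀ t, g A B t = 0 := by
      intro t
      have b1 := g_bounds hh t
      have b2 := g_bounds hh' t
      rw [Set.mem_Icc] at b1 b2
      cases hN1 : h ⟨N - 1, Nat.sub_lt (Npos (N:=N)) Nat.one_pos⟩ <;>
        cases hN1' : h' ⟨N - 1, Nat.sub_lt (Npos (N:=N)) Nat.one_pos⟩ <;>
          rw [hN1] at b1 hs <;> rw [hN1'] at b2 hs <;> simp at b1 b2 hs <;> omega
    ext i
    have h1 := hz ((i : ℕ) + 1)
    have h2 := hz (i : ℕ)
    have hstep := g_succ A B i.isLt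
    simp only [Fin.eta] at hstep
    rw [h1, h2] at hstep
    by_cases hA : i ∈ A <;> by_cases hB : i ∈ B <;> simp [hA, hB] at hstep ⊢

lemma g_self (A : Finset (Fin N)) (t : ℕ) : g A A t = 0 := by simp [g]

lemma card_self (A : Finset (Fin N)) : (rowConfigs A A).card = 2 := by
  classical
  have hkey : rowConfigs A A = {fun _ => true, fun _ => false} := by
    ext h
    simp only [Finset.mem_insert, Finset.mem_singleton]
    constructor
    · intro hh
      have hc : ∀ j : Fin N, h j = h ⟨N - 1, Nat.sub_lt (Npos (N:=N)) Nat.one_pos⟩ := by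
        intro j
        have w := h_walk hh j.val j.isLt
        simp only [Fin.eta, g_self, add_zero] at w
        cases hj : h j <;>
          cases hj' : h ⟨N - 1, Nat.sub_lt (Npos (N:=N)) Nat.one_pos⟩ <;>
            rw [hj, hj'] at w <;> simp_all
      cases hj' : h ⟨N - 1, Nat.sub_lt (Npos (N:=N)) Nat.one_pos⟩
      · right; funext j; rw [hc j, hj']
      · left; funext j; rw [hc j, hj']
    · intro hh
      have : ∀ c : Bool, (fun _ : Fin N => c) ∈ rowConfigs A A := by
        intro c
        rw [mem_iff]
        intro i
        simp
      rcases hh with rfl | rfl <;> exact this _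
  rw [hkey]
  rw [Finset.card_insert_of_notMem, Finset.card_singleton]
  simp only [Finset.mem_singleton]
  intro hcon
  have := congrFun hcon ⟨0, Npos (N:=N)⟩
  simp at this

lemma mem_swap {A B : Finset (Fin N)} {h : Fin N → Bool} (hh : h ∈ rowConfigs A B) :
    (fun i => !(h i)) ∈ rowConfigs B A := by
  rw [mem_iff] at hh ⊢
  intro i
  have e := hh i
  cases h1 : h i <;> cases h2 : h (i - 1) <;> by_cases hA : i ∈ A <;> by_cases hB : i ∈ B <;>
    rw [h1, h2] at e <;> simp [hA, hB] at e <;> simp [h1, h2, hA, hB]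

lemma g_swap (A B : Finset (Fin N)) (t : ℕ) : g B A t = - g A B t := by simp [g]

lemma construct {A B : Finset (Fin N)} (h0 : g A B N = 0)
    (hbd : ∀ t, 0 ≤ g A B t ∧ g A B t ≤ 1) :
    (fun i : Fin N => decide (g A B ((i : ℕ) + 1) = 1)) ∈ rowConfigs A B := by
  rw [mem_iff]
  intro i
  have hstep := g_succ A B i.isLt
  simp only [Fin.eta] at hstep
  have e1 : (if decide (g A B ((i : ℕ) + 1) = 1) then 1 else 0 : ℤ) = g A B ((i : ℕ) + 1) := by
    have := hbd ((i : ℕ) + 1)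
    by_cases hg : g A B ((i : ℕ) + 1) = 1 <;> simp [hg] <;> omega
  have e2 : (if decide (g A B (((i - 1 : Fin N) : ℕ) + 1) = 1) then 1 else 0 : ℤ)
      = g A B (i : ℕ) := by
    rw [sub_one_val]
    by_cases hi0 : (i : ℕ) = 0
    · have hN1 : N - 1 + 1 = N := by have := Npos (N := N); omega
      rw [if_pos hi0, hN1, hi0, h0, g_zero]
      simp
    · have : (i : ℕ) - 1 + 1 = (i : ℕ) := by omega
      rw [if_neg hi0, this]
      have := hbd (i : ℕ)
      by_cases hg : g A B (i : ℕ) = 1 <;> simp [hg] <;> omega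
  rw [e1, e2]
  omega

lemma nonempty_iff {A B : Finset (Fin N)} :
    (rowConfigs A B).Nonempty ↔ (g A B N = 0 ∧
      ((∀ t, 0 ≤ g A B t ∧ g A B t ≤ 1) ∨ (∀ t, -1 ≤ g A B t ∧ g A B t ≤ 0))) := by
  constructor
  · rintro ⟨h, hh⟩
    refine ⟨gN_eq_zero hh, ?_⟩
    have hb := g_bounds hh
    cases hN1 : h ⟨N - 1, Nat.sub_lt (Npos (N:=N)) Nat.one_pos⟩
    · left
      intro t
      have := hb t
      rw [Set.mem_Icc, hN1] at this
      simp at this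
      omega
    · right
      intro t
      have := hb t
      rw [Set.mem_Icc, hN1] at this
      simp at this
      omega
  · rintro ⟨h0, hbd | hbd⟩
    · exact ⟨_, construct h0 hbd⟩
    · have h0' : g B A N = 0 := by rw [g_swap]; omega
      have hbd' : ∀ t, 0 ≤ g B A t ∧ g B A t ≤ 1 := by
        intro t
        rw [g_swap]
        have := hbd t
        omega
      exact ⟨_, mem_swap (construct h0' hbd')⟩

lemma sorted_count (t : ℕ) (l : List (Fin N)) (hs : l.Pairwise (· ≤ ·)) :
    ∀ k (hk : k < l.length),
      (l[k] : ℕ) < t ↔ k + 1 ≤ (l.filter (fun i : Fin N => decide ((i : ℕ) < t))).length := by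
  induction l with
  | nil => intro k hk; simp at hk
  | cons x xs ih =>
    intro k hk
    rw [List.pairwise_cons] at hs
    obtain ⟨hx, hxs⟩ := hs
    by_cases hxt : (x : ℕ) < t
    · rw [show List.filter (fun i : Fin N => decide ((i : ℕ) < t)) (x :: xs)
          = x :: List.filter (fun i : Fin N => decide ((i : ℕ) < t)) xs from
        List.filter_cons_of_pos (by simpa using hxt)]
      cases k with
      | zero => simpa using hxt
      | succ k =>
        have hk' : k < xs.length := by simpa using hk
        have := ih hxs k hk'
        simpa using this
    · have hnil : xs.filter (fun i : Fin N => decide ((i : ℕ) < t)) = [] := by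
        rw [List.filter_eq_nil_iff]
        intro a ha
        have hxa : (x : ℕ) ≤ (a : ℕ) := hx a ha
        simp only [decide_eq_true_eq]
        omega
      rw [show List.filter (fun i : Fin N => decide ((i : ℕ) < t)) (x :: xs)
          = List.filter (fun i : Fin N => decide ((i : ℕ) < t)) xs from
        List.filter_cons_of_neg (by simpa using hxt), hnil]
      simp only [List.length_nil]
      constructor
      · intro hlt
        exfalso
        cases k with
        | zero => simp at hlt; omega
        | succ k =>
          have hk' : k < xs.length := by simpa using hk
          have h1 : x ≤ xs[k] := hx _ (List.getElem_mem hk')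
          have : ((x :: xs)[k + 1] : ℕ) = (xs[k] : ℕ) := by simp
          rw [this] at hlt
          have := Fin.le_def.mp h1
          omega
      · omega

lemma posList_eq (A : Finset (Fin N)) :
    posList A = (A.sort (· ≤ ·)).map (fun i : Fin N => (i : ℕ) + 1) := by
  unfold posList
  have hfm : ∀ l : List (Fin N), (l.flatMap fun (a : Fin N) => ([(a : ℕ)] : List ℕ))
      = l.map (fun i : Fin N => (i : ℕ)) := by
    intro l
    induction l with
    | nil => rfl
    | cons x xs ih => simp [ih]
  simp [hfm, List.map_map, Function.comp]

lemma posList_length (A : Finset (Fin N)) : (posList A).length = A.card := by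
  rw [posList_eq, List.length_map, Finset.length_sort]

lemma cnt_eq_filter_sort (A : Finset (Fin N)) (t : ℕ) :
    cnt A t = ((A.sort (· ≤ ·)).filter (fun i : Fin N => decide ((i : ℕ) < t))).length := by
  classical
  unfold cnt
  rw [Finset.card, Finset.filter_val, ← Finset.sort_eq (r := (· ≤ ·)) (s := A), Multiset.filter_coe,
    Multiset.coe_card]

lemma posList_le_iff {A : Finset (Fin N)} {k : ℕ} (hk : k < A.card) (t : ℕ) :
    (posList A).getD k 0 ≤ t ↔ k + 1 ≤ cnt A t := by
  have hk' : k < ((A.sort (· ≤ ·)).map (fun i : Fin N => (i : ℕ) + 1)).length := by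
    rw [List.length_map, Finset.length_sort]; exact hk
  have hks : k < (A.sort (· ≤ ·)).length := by rw [Finset.length_sort]; exact hk
  rw [posList_eq, List.getD_eq_getElem _ _ hk', List.getElem_map]
  rw [cnt_eq_filter_sort]
  have := sorted_count t (A.sort (· ≤ ·)) (Finset.pairwise_sort _ _) k hks
  omega

lemma cnt_le_card (A : Finset (Fin N)) (t : ℕ) : cnt A t ≤ A.card :=
  Finset.card_filter_le _ _

lemma interlace_iff {A B : Finset (Fin N)} (hc : A.card = B.card) :
    seqInterlace (posList A) (posList B) ↔ ∀ t, 0 ≤ g A B t ∧ g A B t ≤ 1 := by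
  constructor
  · intro hI t
    unfold g
    have hBA : cnt B t ≤ cnt A t := by
      by_cases hB0 : cnt B t = 0
      · omega
      · have hm : cnt B t - 1 < B.card := by
          have := cnt_le_card B t; omega
        have hmA : cnt B t - 1 < A.card := by omega
        have h1 : (posList B).getD (cnt B t - 1) 0 ≤ t :=
          (posList_le_iff hm t).mpr (by omega)
        have h2 := (hI (cnt B t - 1) (by rw [posList_length]; omega)).1
        have h3 := (posList_le_iff hmA t).mp (le_trans h2 h1)
        omega
    have hAB : cnt A t ≤ cnt B t + 1 := by
      by_cases hA1 : cnt A t ≤ 1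
      · omega
      · have hm : cnt A t - 1 < A.card := by
          have := cnt_le_card A t; omega
        have h1 : (posList A).getD (cnt A t - 1) 0 ≤ t :=
          (posList_le_iff hm t).mpr (by omega)
        have h2 := (hI (cnt A t - 2) (by rw [posList_length]; omega)).2
          (by rw [posList_length]; omega)
        have hidx : cnt A t - 2 + 1 = cnt A t - 1 := by omega
        rw [hidx] at h2
        have hmB : cnt A t - 2 < B.card := by omega
        have h3 := (posList_le_iff hmB t).mp (le_trans h2 h1)
        omega
    omega
  · intro hg k hk
    rw [posList_length] at hk
    have hkB : k < B.card := hc ▸ hk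
    constructor
    · set t := (posList B).getD k 0 with ht
      have h1 : k + 1 ≤ cnt B t := (posList_le_iff hkB t).mp le_rfl
      have h2 : k + 1 ≤ cnt A t := by
        have := (hg t).1
        unfold g at this
        omega
      exact (posList_le_iff hk t).mpr h2
    · intro hk1
      rw [posList_length] at hk1
      set t := (posList A).getD (k + 1) 0 with ht
      have h1 : k + 2 ≤ cnt A t := (posList_le_iff hk1 t).mp le_rfl
      have h2 : k + 1 ≤ cnt B t := by
        have := (hg t).2
        unfold g at this
        omega
      exact (posList_le_iff hkB t).mpr h2

lemma card_eq_iff_gN {A B : Finset (Fin N)} : A.card = B.card ↔ g A B N = 0 := by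
  rw [g_of_ge A B le_rfl]
  omega

lemma interlaced_iff_nonempty {A B : Finset (Fin N)} :
    Interlaced A B ↔ (rowConfigs A B).Nonempty := by
  rw [nonempty_iff]
  unfold Interlaced
  constructor
  · rintro ⟨hc, hI | hI⟩
    · refine ⟨card_eq_iff_gN.mp hc, Or.inl ?_⟩
      intro t
      have := (interlace_iff hc).mp hI t
      omega
    · refine ⟨card_eq_iff_gN.mp hc, Or.inr ?_⟩
      intro t
      have := (interlace_iff hc.symm).mp hI t
      rw [g_swap] at this
      omega
  · rintro ⟨h0, hI | hI⟩
    · refine ⟨card_eq_iff_gN.mpr h0, Or.inl ?_⟩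
      refine (interlace_iff (card_eq_iff_gN.mpr h0)).mpr ?_
      intro t
      have := hI t
      omega
    · refine ⟨card_eq_iff_gN.mpr h0, Or.inr ?_⟩
      refine (interlace_iff (card_eq_iff_gN.mpr h0).symm).mpr ?_
      intro t
      have h1 := hI t
      have h2 := g_swap A B t
      omega


end CR

open scoped Classical in
/-- **Lemma 4.1: the number of one-row ice configurations with prescribed vertical
boundary.** -/
theorem card_rowConfigs (N : ℕ) [NeZero N] (A B : Finset (Fin N)) :
    (rowConfigs A B).card =
      if A = B then 2 else if Interlaced A B then 1 else 0 := by
  by_cases hAB : A = B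
  · rw [if_pos hAB, hAB]
    exact CR.card_self B
  · rw [if_neg hAB]
    by_cases hI : Interlaced A B
    · rw [if_pos hI]
      have hne := CR.interlaced_iff_nonempty.mp hI
      have hle : (rowConfigs A B).card ≤ 1 :=
        Finset.card_le_one.mpr fun a ha b hb => CR.eq_of_mem hAB ha hb
      have hpos := Finset.Nonempty.card_pos hne
      omega
    · rw [if_neg hI]
      rw [Finset.card_eq_zero]
      by_contra hne
      exact hI (CR.interlaced_iff_nonempty.mpr (Finset.nonempty_iff_ne_empty.mpr hne))
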